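/- Let G be a 2-connected graph of even order with an even 2-cut C and marked C-components G₁, G₂. Then G is matching covered if and only if both G₁ and G₂ are matching covered. -/

import Mathlib

noncomputable section
open scoped Classical

/-- The underlying simple graph of a multigraph given by `ends`. -/
def toSimple {V E : Type} (ends : E → Sym2 V) : SimpleGraph V where
  Adj u w := u ≠ w ∧ ∃ e, ends e = s(u, w)
  symm := by
    constructor
    rintro u w ⟨hne, e, he⟩
    exact ⟨hne.symm, e, by rw [he]; exact Sym2.eq_swap⟩
  loopless := by constructor; rintro u ⟨hne, -⟩; exact hne rfl

/-- The edge cut `∂(X)`. -/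
def Cut {V E : Type} (ends : E → Sym2 V) (X : Set V) : Set E :=
  {e | ∃ u ∈ X, ∃ w, w ∉ X ∧ ends e = s(u, w)}

/-- Degree of a vertex (counting multiplicities). -/
noncomputable def deg {V E : Type} (ends : E → Sym2 V) (v : V) : ℕ :=
  {e | v ∈ ends e}.ncard

/-- A perfect matching: every vertex is incident with exactly one edge of `M`. -/
def IsPM {V E : Type} (ends : E → Sym2 V) (M : Set E) : Prop :=
  ∀ v : V, ∃! e, e ∈ M ∧ v ∈ ends e

/-- Push a vertex of `X` into the subtype `↥X` (default `a` off `X`). -/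
noncomputable def restrVert {V : Type} (X : Set V) (a : ↥X) (v : V) : ↥X :=
  if h : v ∈ X then ⟨v, h⟩ else a

/-- The marked `C`-component of a multigraph on the shore `X`: its vertices are
those of `X`, its edges are the edges with both ends in `X` together with one
extra marker edge joining `a` and `b` (the ends in `X` of the two cut edges). -/
noncomputable def markedEnds {V E : Type} (ends : E → Sym2 V) (X : Set V)
    (a b : ↥X) : ({e : E // ∀ v ∈ ends e, v ∈ X} ⊕ Unit) → Sym2 ↥X
  | Sum.inl e => (ends e.val).map (restrVert X a)
  | Sum.inr _ => s(a, b)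

/-- `G` is 2-connected: connected and removing any single vertex leaves it
connected. -/
def TwoConnected {V E : Type} (ends : E → Sym2 V) : Prop :=
  (toSimple ends).Connected ∧
    ∀ v : V, Set.Nonempty {w | w ≠ v} → ((toSimple ends).induce {w | w ≠ v}).Connected

/-- A matching covered graph: connected, of order at least two, and every edge
lies in some perfect matching. -/
def IsMC {V E : Type} (ends : E → Sym2 V) : Prop :=
  (toSimple ends).Connected ∧ 2 ≤ Nat.card V ∧ ∀ e, ∃ M, IsPM ends M ∧ e ∈ M


section Helpers

variable {V E : Type}

lemma sym2_rep (s : Sym2 V) : ∃ x y, s = s(x, y) := by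
  induction s using Sym2.ind with | _ x y => exact ⟨x, y, rfl⟩

lemma cut_compl (ends : E → Sym2 V) (X : Set V) : Cut ends Xᶜ = Cut ends X := by
  ext e
  constructor
  · rintro ⟨u, hu, w, hw, he⟩
    exact ⟨w, by simpa using hw, u, hu, he.trans Sym2.eq_swap⟩
  · rintro ⟨u, hu, w, hw, he⟩
    exact ⟨w, hw, u, by simpa using hu, he.trans Sym2.eq_swap⟩

lemma cross_eq {ends : E → Sym2 V} {Y : Set V} {f f' : E}
    (hC : Cut ends Y = {f, f'}) {e : E} {x z : V}
    (he : ends e = s(x, z)) (hx : x ∈ Y) (hz : z ∉ Y) : e = f ∨ e = f' := by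
  have hm : e ∈ Cut ends Y := ⟨x, hx, z, hz, he⟩
  rw [hC] at hm
  simpa using hm

lemma cross_ends {ends : E → Sym2 V} {Y : Set V} {f f' : E}
    (hC : Cut ends Y = {f, f'}) {p p' q q' : V} (hp' : p' ∉ Y) (hq' : q' ∉ Y)
    (hf : ends f = s(p, p')) (hf' : ends f' = s(q, q'))
    {e : E} {x z : V} (he : ends e = s(x, z)) (hx : x ∈ Y) (hz : z ∉ Y) :
    (e = f ∧ x = p ∧ z = p') ∨ (e = f' ∧ x = q ∧ z = q') := by
  rcases cross_eq hC he hx hz with rfl | rfl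
  · left
    refine ⟨rfl, ?_⟩
    rw [hf] at he
    rcases Sym2.eq_iff.mp he with ⟨h1, h2⟩ | ⟨h1, h2⟩
    · exact ⟨h1.symm, h2.symm⟩
    · exact absurd (h2 ▸ hx) hp'
  · right
    refine ⟨rfl, ?_⟩
    rw [hf'] at he
    rcases Sym2.eq_iff.mp he with ⟨h1, h2⟩ | ⟨h1, h2⟩
    · exact ⟨h1.symm, h2.symm⟩
    · exact absurd (h2 ▸ hx) hq'

lemma mem_marked_inl {ends : E → Sym2 V} {Y : Set V} (a b : ↥Y)
    (e : {e : E // ∀ v ∈ ends e, v ∈ Y}) (x : ↥Y) :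
    x ∈ markedEnds ends Y a b (Sum.inl e) ↔ (x : V) ∈ ends e.val := by
  show x ∈ (ends e.val).map (restrVert Y a) ↔ _
  rw [Sym2.mem_map]
  constructor
  · rintro ⟨w, hw, hwx⟩
    have hwY := e.prop w hw
    rw [restrVert, dif_pos hwY] at hwx
    have hw' : w = (x : V) := congrArg Subtype.val hwx
    rwa [hw'] at hw
  · intro hx
    exact ⟨x, hx, by rw [restrVert, dif_pos x.prop]⟩

end Helpers

section Parity

variable {V E : Type} [Fintype V] [Fintype E]

lemma pm_parity {ends : E → Sym2 V} (hloop : ∀ e, ¬ (ends e).IsDiag)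
    {Y : Set V} (hYeven : Even Y.ncard)
    {f f' : E} (hff : f ≠ f') (hC : Cut ends Y = {f, f'})
    {M : Set E} (hM : IsPM ends M) : (f ∈ M ∧ f' ∈ M) ∨ (f ∉ M ∧ f' ∉ M) := by
  classical
  set Yf : Finset V := Y.toFinset with hYf
  set Mf : Finset E := M.toFinset with hMf
  set T : E → Finset V := fun e => Yf.filter (· ∈ ends e) with hT
  have hdisj : ∀ e₁ ∈ Mf, ∀ e₂ ∈ Mf, e₁ ≠ e₂ → Disjoint (T e₁) (T e₂) := by
    intro e₁ h₁ e₂ h₂ hne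
    rw [Finset.disjoint_left]
    intro v hv₁ hv₂
    simp only [hT, Finset.mem_filter] at hv₁ hv₂
    obtain ⟨e₀, -, hu⟩ := hM v
    exact hne ((hu e₁ ⟨Set.mem_toFinset.mp h₁, hv₁.2⟩).trans
      (hu e₂ ⟨Set.mem_toFinset.mp h₂, hv₂.2⟩).symm)
  have hcover : Yf = Mf.biUnion T := by
    ext v
    simp only [Finset.mem_biUnion, hT, Finset.mem_filter]
    constructor
    · intro hv
      obtain ⟨e, ⟨heM, hve⟩, -⟩ := hM v
      exact ⟨e, Set.mem_toFinset.mpr heM, hv, hve⟩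
    · rintro ⟨e, -, hv, -⟩; exact hv
  have hcard : Yf.card = ∑ e ∈ Mf, (T e).card := by
    rw [hcover]; exact Finset.card_biUnion hdisj
  have hcross_card : ∀ e ∈ Mf, e ∈ Cut ends Y → (T e).card = 1 := by
    rintro e - ⟨u, hu, w, hw, he⟩
    have : T e = {u} := by
      ext v
      simp only [hT, hYf, Finset.mem_filter, Finset.mem_singleton, Set.mem_toFinset]
      constructor
      · rintro ⟨hvY, hve⟩
        rw [he, Sym2.mem_iff] at hve
        rcases hve with rfl | rfl
        · rfl
        · exact absurd hvY hw
      · rintro rfl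
        exact ⟨hu, by rw [he]; exact Sym2.mem_mk_left _ _⟩
    rw [this, Finset.card_singleton]
  have hncross_card : ∀ e ∈ Mf, e ∉ Cut ends Y → Even (T e).card := by
    rintro e - hnc
    obtain ⟨x, z, he⟩ := sym2_rep (ends e)
    have hxz : x ≠ z := by
      intro h; exact hloop e (by rw [he, h]; exact Sym2.mk_isDiag_iff.mpr rfl)
    by_cases hx : x ∈ Y
    · by_cases hz : z ∈ Y
      · have : T e = {x, z} := by
          ext v
          simp only [hT, hYf, Finset.mem_filter, Finset.mem_insert, Finset.mem_singleton,
            Set.mem_toFinset]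
          constructor
          · rintro ⟨-, hve⟩
            rwa [he, Sym2.mem_iff] at hve
          · rintro (rfl | rfl)
            · exact ⟨hx, by rw [he]; exact Sym2.mem_mk_left _ _⟩
            · exact ⟨hz, by rw [he]; exact Sym2.mem_mk_right _ _⟩
        rw [this, Finset.card_pair hxz]
        exact ⟨1, rfl⟩
      · exact absurd ⟨x, hx, z, hz, he⟩ hnc
    · by_cases hz : z ∈ Y
      · exact absurd ⟨z, hz, x, hx, he.trans Sym2.eq_swap⟩ hnc
      · have : T e = ∅ := by
          ext v
          simp only [hT, hYf, Finset.mem_filter, Finset.notMem_empty, iff_false,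
            Set.mem_toFinset, not_and]
          intro hvY hve
          rw [he, Sym2.mem_iff] at hve
          rcases hve with rfl | rfl
          exacts [hx hvY, hz hvY]
        rw [this]; exact ⟨0, rfl⟩
  have hEvenYf : Even Yf.card := by rwa [Set.ncard_eq_toFinset_card'] at hYeven
  have hsplit := Finset.sum_filter_add_sum_filter_not Mf (· ∈ Cut ends Y)
    (fun e => (T e).card)
  have hEvenRest : Even (∑ e ∈ Mf.filter (fun e => ¬ e ∈ Cut ends Y), (T e).card) := by
    rw [even_iff_two_dvd]
    refine Finset.dvd_sum ?_
    intro e he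
    rw [Finset.mem_filter] at he
    exact (hncross_card e he.1 he.2).two_dvd
  have hEvenCross : Even (∑ e ∈ Mf.filter (fun e => e ∈ Cut ends Y), (T e).card) := by
    have h1 : Even (∑ e ∈ Mf.filter (fun e => e ∈ Cut ends Y), (T e).card +
        ∑ e ∈ Mf.filter (fun e => ¬ e ∈ Cut ends Y), (T e).card) := by
      rw [hsplit, ← hcard]; exact hEvenYf
    exact (Nat.even_add.mp h1).mpr hEvenRest
  set cF : Finset E := Mf.filter (fun e => e ∈ Cut ends Y) with hcF
  have hsum_card : ∑ e ∈ cF, (T e).card = cF.card := by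
    rw [Finset.card_eq_sum_ones]
    refine Finset.sum_congr rfl ?_
    intro e he
    rw [hcF, Finset.mem_filter] at he
    exact hcross_card e he.1 he.2
  have hEvencF : Even cF.card := by rwa [hsum_card] at hEvenCross
  have hsub : cF ⊆ {f, f'} := by
    intro e he
    rw [hcF, Finset.mem_filter] at he
    have := he.2
    rw [hC] at this
    simpa using this
  have hfull : ∀ g, g ∈ M → g ∈ Cut ends Y → cF = {f, f'} := by
    intro g hgM hgC
    have hg : g ∈ cF := by
      rw [hcF, Finset.mem_filter]
      exact ⟨Set.mem_toFinset.mpr hgM, hgC⟩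
    have hpos : 0 < cF.card := Finset.card_pos.mpr ⟨g, hg⟩
    obtain ⟨k, hk⟩ := hEvencF
    have h2 : 2 ≤ cF.card := by omega
    refine Finset.eq_of_subset_of_card_le hsub ?_
    rwa [Finset.card_pair hff]
  have hfC : f ∈ Cut ends Y := by rw [hC]; exact Set.mem_insert _ _
  have hf'C : f' ∈ Cut ends Y := by rw [hC]; exact Set.mem_insert_iff.mpr (Or.inr rfl)
  by_cases hfM : f ∈ M
  · left
    refine ⟨hfM, ?_⟩
    have := hfull f hfM hfC
    have hf' : f' ∈ cF := by rw [this]; simp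
    rw [hcF, Finset.mem_filter] at hf'
    exact Set.mem_toFinset.mp hf'.1
  · right
    refine ⟨hfM, fun hf'M => ?_⟩
    have := hfull f' hf'M hf'C
    have hfcF : f ∈ cF := by rw [this]; simp
    rw [hcF, Finset.mem_filter] at hfcF
    exact hfM (Set.mem_toFinset.mp hfcF.1)

end Parity

section Restrict

variable {V E : Type}

lemma restrict_pm {ends : E → Sym2 V} {Y : Set V} {f f' : E}
    (hC : Cut ends Y = {f, f'})
    {p p' q q' : V} (hp : p ∈ Y) (hp' : p' ∉ Y) (hq : q ∈ Y) (hq' : q' ∉ Y)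
    (hf : ends f = s(p, p')) (hf' : ends f' = s(q, q'))
    {M : Set E} (hM : IsPM ends M) (hpar : f ∈ M ↔ f' ∈ M) :
    IsPM (markedEnds ends Y ⟨p, hp⟩ ⟨q, hq⟩)
      {ε | Sum.elim (fun e => e.val ∈ M) (fun _ => f ∈ M) ε} := by
  rintro ⟨x, hx⟩
  obtain ⟨e, ⟨heM, hxe⟩, hu⟩ := hM x
  by_cases hef : e = f
  · subst hef
    have hxp : x = p := by
      rw [hf, Sym2.mem_iff] at hxe
      rcases hxe with h | h
      · exact h
      · exact absurd (h ▸ hx) hp'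
    refine ⟨Sum.inr (), ⟨heM, ?_⟩, ?_⟩
    · show (⟨x, hx⟩ : ↥Y) ∈ s((⟨p, hp⟩ : ↥Y), ⟨q, hq⟩)
      rw [Sym2.mem_iff]
      exact Or.inl (Subtype.ext hxp)
    · rintro (e' | u') ⟨he'M, hxe'⟩
      · exfalso
        have hx' : (x : V) ∈ ends e'.val := (mem_marked_inl _ _ e' _).mp hxe'
        have he'e : e'.val = e := hu e'.val ⟨he'M, hx'⟩
        have : p' ∈ Y := e'.prop p' (by rw [he'e, hf]; exact Sym2.mem_mk_right _ _)
        exact hp' this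
      · cases u'; rfl
  · by_cases hef' : e = f'
    · subst hef'
      have hxq : x = q := by
        rw [hf', Sym2.mem_iff] at hxe
        rcases hxe with h | h
        · exact h
        · exact absurd (h ▸ hx) hq'
      refine ⟨Sum.inr (), ⟨hpar.mpr heM, ?_⟩, ?_⟩
      · show (⟨x, hx⟩ : ↥Y) ∈ s((⟨p, hp⟩ : ↥Y), ⟨q, hq⟩)
        rw [Sym2.mem_iff]
        exact Or.inr (Subtype.ext hxq)
      · rintro (e' | u') ⟨he'M, hxe'⟩
        · exfalso
          have hx' : (x : V) ∈ ends e'.val := (mem_marked_inl _ _ e' _).mp hxe'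
          have he'e : e'.val = e := hu e'.val ⟨he'M, hx'⟩
          have : q' ∈ Y := e'.prop q' (by rw [he'e, hf']; exact Sym2.mem_mk_right _ _)
          exact hq' this
        · cases u'; rfl
    · obtain ⟨x₀, z₀, he⟩ := sym2_rep (ends e)
      have hall : ∀ v ∈ ends e, v ∈ Y := by
        have hboth : x₀ ∈ Y ∧ z₀ ∈ Y := by
          by_cases hx₀ : x₀ ∈ Y
          · by_cases hz₀ : z₀ ∈ Y
            · exact ⟨hx₀, hz₀⟩
            · rcases cross_eq hC he hx₀ hz₀ with rfl | rfl
              exacts [absurd rfl hef, absurd rfl hef']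
          · by_cases hz₀ : z₀ ∈ Y
            · rcases cross_eq hC (he.trans Sym2.eq_swap) hz₀ hx₀ with rfl | rfl
              exacts [absurd rfl hef, absurd rfl hef']
            · exfalso
              rw [he, Sym2.mem_iff] at hxe
              rcases hxe with rfl | rfl
              exacts [hx₀ hx, hz₀ hx]
        intro v hv
        rw [he, Sym2.mem_iff] at hv
        rcases hv with rfl | rfl
        exacts [hboth.1, hboth.2]
      refine ⟨Sum.inl ⟨e, hall⟩, ⟨heM, (mem_marked_inl _ _ _ _).mpr hxe⟩, ?_⟩
      rintro (e' | u') ⟨he'M, hxe'⟩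
      · have hx' : (x : V) ∈ ends e'.val := (mem_marked_inl _ _ e' _).mp hxe'
        have he'e : e'.val = e := hu e'.val ⟨he'M, hx'⟩
        exact congrArg Sum.inl (Subtype.ext he'e)
      · exfalso
        have hxe'' : (⟨x, hx⟩ : ↥Y) ∈ s((⟨p, hp⟩ : ↥Y), ⟨q, hq⟩) := hxe'
        rw [Sym2.mem_iff] at hxe''
        rcases hxe'' with h | h
        · have hxp : x = p := congrArg Subtype.val h
          have : f = e := hu f ⟨he'M, by rw [hf, hxp]; exact Sym2.mem_mk_left _ _⟩
          exact hef this.symm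
        · have hxq : x = q := congrArg Subtype.val h
          have : f' = e := hu f' ⟨hpar.mp he'M, by rw [hf', hxq]; exact Sym2.mem_mk_left _ _⟩
          exact hef' this.symm

end Restrict

section Conn

variable {V E : Type}

lemma marked_connected {ends : E → Sym2 V} {Y : Set V} {f f' : E}
    (hC : Cut ends Y = {f, f'}) {p p' q q' : V} (hp : p ∈ Y) (hp' : p' ∉ Y)
    (hq : q ∈ Y) (hq' : q' ∉ Y) (hf : ends f = s(p, p')) (hf' : ends f' = s(q, q'))
    (hconn : (toSimple ends).Connected) :
    (toSimple (markedEnds ends Y ⟨p, hp⟩ ⟨q, hq⟩)).Connected := by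
  set G₁ := toSimple (markedEnds ends Y ⟨p, hp⟩ ⟨q, hq⟩) with hG₁
  have hab : G₁.Reachable ⟨p, hp⟩ ⟨q, hq⟩ := by
    by_cases hpq : (⟨p, hp⟩ : ↥Y) = ⟨q, hq⟩
    · rw [hpq]
    · exact SimpleGraph.Adj.reachable ⟨hpq, Sum.inr (), rfl⟩
  have hlift : ∀ {x z : V} (hx : x ∈ Y) (hz : z ∈ Y), (toSimple ends).Adj x z →
      G₁.Adj ⟨x, hx⟩ ⟨z, hz⟩ := by
    rintro x z hx hz ⟨hne, e, he⟩
    have hall : ∀ v ∈ ends e, v ∈ Y := by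
      intro v hv
      rw [he, Sym2.mem_iff] at hv
      rcases hv with rfl | rfl
      exacts [hx, hz]
    refine ⟨fun hh => hne (congrArg Subtype.val hh), Sum.inl ⟨e, hall⟩, ?_⟩
    show Sym2.map (restrVert Y ⟨p, hp⟩) (ends e) = _
    rw [he, Sym2.map_pair_eq, restrVert, restrVert, dif_pos hx, dif_pos hz]
  have key : ∀ {x y : V} (_ : (toSimple ends).Walk x y),
      (∀ (hx : x ∈ Y) (hy : y ∈ Y), G₁.Reachable ⟨x, hx⟩ ⟨y, hy⟩) ∧
      (∀ (hx : x ∈ Y), y ∉ Y → G₁.Reachable ⟨x, hx⟩ ⟨p, hp⟩) ∧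
      (x ∉ Y → ∀ (hy : y ∈ Y), G₁.Reachable ⟨p, hp⟩ ⟨y, hy⟩) := by
    intro x y w
    induction w with
    | nil =>
      exact ⟨fun hx hy => SimpleGraph.Reachable.refl _,
        fun hx hy => absurd hx hy, fun hx hy => absurd hy hx⟩
    | @cons x z y h w' ih =>
      by_cases hz : z ∈ Y
      · refine ⟨fun hx hy => ((hlift hx hz h).reachable).trans (ih.1 hz hy),
          fun hx hy => ((hlift hx hz h).reachable).trans (ih.2.1 hz hy),
          fun hx hy => ?_⟩
        obtain ⟨hne, e, he⟩ := h
        rcases cross_ends hC hp' hq' hf hf' (he.trans Sym2.eq_swap) hz hx with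
          ⟨-, hzp, -⟩ | ⟨-, hzq, -⟩
        · have : (⟨p, hp⟩ : ↥Y) = ⟨z, hz⟩ := Subtype.ext hzp.symm
          rw [this]
          exact ih.1 hz hy
        · have : (⟨q, hq⟩ : ↥Y) = ⟨z, hz⟩ := Subtype.ext hzq.symm
          exact hab.trans (this ▸ ih.1 hz hy)
      · have hstart : ∀ (hx : x ∈ Y), G₁.Reachable ⟨x, hx⟩ ⟨p, hp⟩ := by
          intro hx
          obtain ⟨hne, e, he⟩ := h
          rcases cross_ends hC hp' hq' hf hf' he hx hz with ⟨-, hxp, -⟩ | ⟨-, hxq, -⟩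
          · have hxp' : (⟨x, hx⟩ : ↥Y) = ⟨p, hp⟩ := Subtype.ext hxp
            rw [hxp']
          · have hxq' : (⟨x, hx⟩ : ↥Y) = ⟨q, hq⟩ := Subtype.ext hxq
            rw [hxq']
            exact hab.symm
        exact ⟨fun hx hy => (hstart hx).trans (ih.2.2 hz hy),
          fun hx _ => hstart hx, fun hx hy => ih.2.2 hz hy⟩
  rw [SimpleGraph.connected_iff]
  refine ⟨fun x y => ?_, ⟨⟨p, hp⟩⟩⟩
  obtain ⟨w⟩ := hconn.preconnected x.val y.val
  exact (key w).1 x.prop y.prop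

lemma cut_ends_ne {ends : E → Sym2 V} (h2c : TwoConnected ends)
    {Y : Set V} {f f' : E} (hC : Cut ends Y = {f, f'})
    {p p' q q' : V} (hp : p ∈ Y) (hp' : p' ∉ Y) (hq : q ∈ Y) (hq' : q' ∉ Y)
    (hf : ends f = s(p, p')) (hf' : ends f' = s(q, q'))
    (hY2 : 1 < Y.ncard) : p ≠ q := by
  intro hpq
  subst hpq
  obtain ⟨x, hxY, hxp⟩ := Set.exists_ne_of_one_lt_ncard hY2 p
  have hpne : p' ≠ p := fun h => hp' (h ▸ hp)
  have hconn := h2c.2 p ⟨p', hpne⟩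
  have hkey : ∀ {r s : ↥{w | w ≠ p}}
      (_ : ((toSimple ends).induce {w | w ≠ p}).Walk r s),
      (r : V) ∈ Y → (s : V) ∈ Y := by
    intro r s w
    induction w with
    | nil => exact id
    | @cons r z s h w' ih =>
      intro hr
      refine ih ?_
      have hadj : (toSimple ends).Adj ↑r ↑z := h
      obtain ⟨hne, e, he⟩ := hadj
      by_cases hz : (z : V) ∈ Y
      · exact hz
      · exfalso
        rcases cross_ends hC hp' hq' hf hf' he hr hz with ⟨-, hrp, -⟩ | ⟨-, hrp, -⟩
        · exact r.prop hrp
        · exact r.prop hrp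
  obtain ⟨w⟩ := hconn.preconnected ⟨x, hxp⟩ ⟨p', hpne⟩
  exact hp' (hkey w hxY)

lemma exists_inside_edge {ends : E → Sym2 V} (h2c : TwoConnected ends)
    {Y : Set V} {f f' : E} (hC : Cut ends Y = {f, f'})
    {p p' q q' : V} (hp : p ∈ Y) (hp' : p' ∉ Y) (hq : q ∈ Y) (hq' : q' ∉ Y)
    (hf : ends f = s(p, p')) (hf' : ends f' = s(q, q'))
    (hp'q' : p' ≠ q') (hYc2 : 1 < Yᶜ.ncard) :
    ∃ (e : E) (_ : ∀ v ∈ ends e, v ∈ Yᶜ), p' ∈ ends e := by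
  obtain ⟨w₀, hw₀, hw₀p'⟩ := Set.exists_ne_of_one_lt_ncard hYc2 p'
  have hw₀Y : w₀ ∉ Y := hw₀
  have hp'p : p' ≠ p := fun h => hp' (h ▸ hp)
  have hw₀pne : w₀ ≠ p := fun h => hw₀Y (h ▸ hp)
  have hconn := h2c.2 p ⟨p', hp'p⟩
  obtain ⟨wk⟩ := hconn.preconnected ⟨p', hp'p⟩ ⟨w₀, hw₀pne⟩
  have hne : (⟨p', hp'p⟩ : ↥{w | w ≠ p}) ≠ ⟨w₀, hw₀pne⟩ :=
    fun h => hw₀p' (congrArg Subtype.val h).symm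
  obtain ⟨z, hadj, -, -⟩ := SimpleGraph.Walk.exists_eq_cons_of_ne hne wk
  have hadjG : (toSimple ends).Adj p' ↑z := hadj
  obtain ⟨hnez, e, he⟩ := hadjG
  by_cases hz : (z : V) ∈ Y
  · exfalso
    rcases cross_ends hC hp' hq' hf hf' (he.trans Sym2.eq_swap) hz hp' with
      ⟨-, hzp, -⟩ | ⟨-, -, hq'eq⟩
    · exact z.prop hzp
    · exact hp'q' hq'eq
  · refine ⟨e, ?_, by rw [he]; exact Sym2.mem_mk_left _ _⟩
    intro v hv
    rw [he, Sym2.mem_iff] at hv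
    rcases hv with rfl | rfl
    exacts [hp', hz]

end Conn

section Combine

variable {V E : Type}

lemma combine_pm {ends : E → Sym2 V}
    {X : Set V} {f f' : E} (hff : f ≠ f')
    {u₁ u₂ v₁ v₂ : V} (hu₁ : u₁ ∈ X) (hu₂ : u₂ ∉ X) (hv₁ : v₁ ∈ X) (hv₂ : v₂ ∉ X)
    (hf : ends f = s(u₁, u₂)) (hf' : ends f' = s(v₁, v₂))
    (hu₁v₁ : u₁ ≠ v₁) (hu₂v₂ : u₂ ≠ v₂)
    {M₁ : Set ({e : E // ∀ v ∈ ends e, v ∈ X} ⊕ Unit)}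
    {M₂ : Set ({e : E // ∀ v ∈ ends e, v ∈ Xᶜ} ⊕ Unit)}
    (hM₁ : IsPM (markedEnds ends X ⟨u₁, hu₁⟩ ⟨v₁, hv₁⟩) M₁)
    (hM₂ : IsPM (markedEnds ends Xᶜ ⟨u₂, hu₂⟩ ⟨v₂, hv₂⟩) M₂)
    (hmark : Sum.inr () ∈ M₁ ↔ Sum.inr () ∈ M₂) :
    IsPM ends {e | (∃ h : ∀ v ∈ ends e, v ∈ X, Sum.inl ⟨e, h⟩ ∈ M₁) ∨
      (∃ h : ∀ v ∈ ends e, v ∈ Xᶜ, Sum.inl ⟨e, h⟩ ∈ M₂) ∨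
      (Sum.inr () ∈ M₁ ∧ (e = f ∨ e = f'))} := by
  intro v
  by_cases hv : v ∈ X
  · obtain ⟨ε, ⟨hεM, hεc⟩, hu⟩ := hM₁ ⟨v, hv⟩
    match ε with
    | Sum.inl e =>
      have hcov : v ∈ ends e.val := (mem_marked_inl _ _ e _).mp hεc
      refine ⟨e.val, ⟨Or.inl ⟨e.prop, hεM⟩, hcov⟩, ?_⟩
      rintro e' ⟨(⟨h, hmem⟩ | ⟨h, hmem⟩ | ⟨hinr, hor⟩), hve'⟩
      · have := hu (Sum.inl ⟨e', h⟩) ⟨hmem, (mem_marked_inl _ _ _ _).mpr hve'⟩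
        have h2 : (⟨e', h⟩ : {e : E // ∀ v ∈ ends e, v ∈ X}) = e := by
          injection this
        exact congrArg Subtype.val h2
      · exact absurd (h v hve') (by simpa using hv)
      · exfalso
        rcases hor with rfl | rfl
        · rw [hf, Sym2.mem_iff] at hve'
          rcases hve' with rfl | rfl
          · have : Sum.inr () = Sum.inl e := hu (Sum.inr ())
              ⟨hinr, Sym2.mem_iff.mpr (Or.inl rfl)⟩
            exact nomatch this
          · exact hu₂ hv
        · rw [hf', Sym2.mem_iff] at hve'
          rcases hve' with rfl | rfl
          · have : Sum.inr () = Sum.inl e := hu (Sum.inr ())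
              ⟨hinr, Sym2.mem_iff.mpr (Or.inr rfl)⟩
            exact nomatch this
          · exact hv₂ hv
    | Sum.inr u =>
      match u with
      | () =>
      have hvc : (⟨v, hv⟩ : ↥X) ∈ s((⟨u₁, hu₁⟩ : ↥X), ⟨v₁, hv₁⟩) := hεc
      rw [Sym2.mem_iff] at hvc
      rcases hvc with h | h
      · have hvu₁ : v = u₁ := congrArg Subtype.val h
        subst hvu₁
        refine ⟨f, ⟨Or.inr (Or.inr ⟨hεM, Or.inl rfl⟩),
          by rw [hf]; exact Sym2.mem_mk_left _ _⟩, ?_⟩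
        rintro e' ⟨(⟨h', hmem⟩ | ⟨h', hmem⟩ | ⟨hinr, hor⟩), hve'⟩
        · have := hu (Sum.inl ⟨e', h'⟩) ⟨hmem, (mem_marked_inl _ _ _ _).mpr hve'⟩
          exact nomatch this
        · exact absurd (h' v hve') (by simpa using hv)
        · rcases hor with rfl | rfl
          · rfl
          · exfalso
            rw [hf', Sym2.mem_iff] at hve'
            rcases hve' with h'' | h''
            · exact hu₁v₁ h''
            · exact hv₂ (h'' ▸ hv)
      · have hvv₁ : v = v₁ := congrArg Subtype.val h
        subst hvv₁
        refine ⟨f', ⟨Or.inr (Or.inr ⟨hεM, Or.inr rfl⟩),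
          by rw [hf']; exact Sym2.mem_mk_left _ _⟩, ?_⟩
        rintro e' ⟨(⟨h', hmem⟩ | ⟨h', hmem⟩ | ⟨hinr, hor⟩), hve'⟩
        · have := hu (Sum.inl ⟨e', h'⟩) ⟨hmem, (mem_marked_inl _ _ _ _).mpr hve'⟩
          exact nomatch this
        · exact absurd (h' v hve') (by simpa using hv)
        · rcases hor with rfl | rfl
          · exfalso
            rw [hf, Sym2.mem_iff] at hve'
            rcases hve' with h'' | h''
            · exact hu₁v₁ h''.symm
            · exact hu₂ (h'' ▸ hv)
          · rfl
  · have hv' : v ∈ Xᶜ := hv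
    obtain ⟨ε, ⟨hεM, hεc⟩, hu⟩ := hM₂ ⟨v, hv'⟩
    match ε with
    | Sum.inl e =>
      have hcov : v ∈ ends e.val := (mem_marked_inl _ _ e _).mp hεc
      refine ⟨e.val, ⟨Or.inr (Or.inl ⟨e.prop, hεM⟩), hcov⟩, ?_⟩
      rintro e' ⟨(⟨h, hmem⟩ | ⟨h, hmem⟩ | ⟨hinr, hor⟩), hve'⟩
      · exact absurd (h v hve') hv
      · have := hu (Sum.inl ⟨e', h⟩) ⟨hmem, (mem_marked_inl _ _ _ _).mpr hve'⟩
        have h2 : (⟨e', h⟩ : {e : E // ∀ v ∈ ends e, v ∈ Xᶜ}) = e := by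
          injection this
        exact congrArg Subtype.val h2
      · exfalso
        rcases hor with rfl | rfl
        · rw [hf, Sym2.mem_iff] at hve'
          rcases hve' with rfl | rfl
          · exact hv hu₁
          · have : Sum.inr () = Sum.inl e := hu (Sum.inr ())
              ⟨hmark.mp hinr, Sym2.mem_iff.mpr (Or.inl rfl)⟩
            exact nomatch this
        · rw [hf', Sym2.mem_iff] at hve'
          rcases hve' with rfl | rfl
          · exact hv hv₁
          · have : Sum.inr () = Sum.inl e := hu (Sum.inr ())
              ⟨hmark.mp hinr, Sym2.mem_iff.mpr (Or.inr rfl)⟩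
            exact nomatch this
    | Sum.inr u =>
      match u with
      | () =>
      have hvc : (⟨v, hv'⟩ : ↥Xᶜ) ∈ s((⟨u₂, hu₂⟩ : ↥Xᶜ), ⟨v₂, hv₂⟩) := hεc
      rw [Sym2.mem_iff] at hvc
      rcases hvc with h | h
      · have hvu₂ : v = u₂ := congrArg Subtype.val h
        subst hvu₂
        refine ⟨f, ⟨Or.inr (Or.inr ⟨hmark.mpr hεM, Or.inl rfl⟩),
          by rw [hf]; exact Sym2.mem_mk_right _ _⟩, ?_⟩
        rintro e' ⟨(⟨h', hmem⟩ | ⟨h', hmem⟩ | ⟨hinr, hor⟩), hve'⟩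
        · exact absurd (h' v hve') hv
        · have := hu (Sum.inl ⟨e', h'⟩) ⟨hmem, (mem_marked_inl _ _ _ _).mpr hve'⟩
          exact nomatch this
        · rcases hor with rfl | rfl
          · rfl
          · exfalso
            rw [hf', Sym2.mem_iff] at hve'
            rcases hve' with h'' | h''
            · exact hv (h'' ▸ hv₁)
            · exact hu₂v₂ h''
      · have hvv₂ : v = v₂ := congrArg Subtype.val h
        subst hvv₂
        refine ⟨f', ⟨Or.inr (Or.inr ⟨hmark.mpr hεM, Or.inr rfl⟩),
          by rw [hf']; exact Sym2.mem_mk_right _ _⟩, ?_⟩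
        rintro e' ⟨(⟨h', hmem⟩ | ⟨h', hmem⟩ | ⟨hinr, hor⟩), hve'⟩
        · exact absurd (h' v hve') hv
        · have := hu (Sum.inl ⟨e', h'⟩) ⟨hmem, (mem_marked_inl _ _ _ _).mpr hve'⟩
          exact nomatch this
        · rcases hor with rfl | rfl
          · exfalso
            rw [hf, Sym2.mem_iff] at hve'
            rcases hve' with h'' | h''
            · exact hv (h'' ▸ hu₁)
            · exact hu₂v₂ h''.symm
          · rfl

end Combine

/-- Let `G` be a 2-connected loopless multigraph of even order with an even
2-cut `C = {f, f'} = ∂(X)` and marked `C`-components `G₁`, `G₂`. Then `G` is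
matching covered if and only if both `G₁` and `G₂` are matching covered. -/
theorem stmt13 {V E : Type} [Fintype V] [Fintype E]
    (ends : E → Sym2 V) (hloop : ∀ e, ¬ (ends e).IsDiag)
    (h2c : TwoConnected ends) (heven : Even (Fintype.card V))
    (X : Set V) (f f' : E) (hff : f ≠ f') (hC : Cut ends X = {f, f'})
    (hXeven : Even X.ncard)
    (u₁ u₂ v₁ v₂ : V) (hu₁ : u₁ ∈ X) (hu₂ : u₂ ∉ X) (hv₁ : v₁ ∈ X) (hv₂ : v₂ ∉ X)
    (hf : ends f = s(u₁, u₂)) (hf' : ends f' = s(v₁, v₂)) :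
    IsMC ends ↔
      (IsMC (markedEnds ends X ⟨u₁, hu₁⟩ ⟨v₁, hv₁⟩) ∧
        IsMC (markedEnds ends Xᶜ ⟨u₂, hu₂⟩ ⟨v₂, hv₂⟩)) := by
  -- basic derived facts
  have hu₂' : u₂ ∈ Xᶜ := hu₂
  have hv₂' : v₂ ∈ Xᶜ := hv₂
  have hu₁' : u₁ ∉ Xᶜ := fun h => h hu₁
  have hv₁' : v₁ ∉ Xᶜ := fun h => h hv₁
  have hCc : Cut ends Xᶜ = {f, f'} := (cut_compl ends X).trans hC
  have hfswap : ends f = s(u₂, u₁) := hf.trans Sym2.eq_swap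
  have hf'swap : ends f' = s(v₂, v₁) := hf'.trans Sym2.eq_swap
  have hsum : X.ncard + Xᶜ.ncard = Nat.card V := Set.ncard_add_ncard_compl X
  have hevenN : Even (Nat.card V) := by rwa [Nat.card_eq_fintype_card]
  have hXcEven : Even Xᶜ.ncard := (Nat.even_add.mp (by rw [hsum]; exact hevenN)).mp hXeven
  have hXpos : 0 < X.ncard := (Set.ncard_pos X.toFinite).mpr ⟨u₁, hu₁⟩
  have hXcpos : 0 < Xᶜ.ncard := (Set.ncard_pos Xᶜ.toFinite).mpr ⟨u₂, hu₂'⟩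
  have hX2 : 1 < X.ncard := by obtain ⟨k, hk⟩ := hXeven; omega
  have hXc2 : 1 < Xᶜ.ncard := by obtain ⟨k, hk⟩ := hXcEven; omega
  have hu₁v₁ : u₁ ≠ v₁ := cut_ends_ne h2c hC hu₁ hu₂ hv₁ hv₂ hf hf' hX2
  have hu₂v₂ : u₂ ≠ v₂ := cut_ends_ne h2c hCc hu₂' hu₁' hv₂' hv₁' hfswap hf'swap hXc2
  have conn₁ := marked_connected hC hu₁ hu₂ hv₁ hv₂ hf hf' h2c.1
  have conn₂ := marked_connected hCc hu₂' hu₁' hv₂' hv₁' hfswap hf'swap h2c.1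
  have card₁ : 2 ≤ Nat.card ↥X := by rw [Nat.card_coe_set_eq]; omega
  have card₂ : 2 ≤ Nat.card ↥(Xᶜ) := by rw [Nat.card_coe_set_eq]; omega
  have cardV : 2 ≤ Nat.card V := by
    have : Nontrivial V := ⟨⟨u₁, u₂, fun h => hu₂ (h ▸ hu₁)⟩⟩
    rw [Nat.card_eq_fintype_card]
    exact Fintype.one_lt_card_iff_nontrivial.mpr this
  constructor
  · rintro ⟨-, -, hpm⟩
    have parIff : ∀ {M : Set E}, IsPM ends M → (f ∈ M ↔ f' ∈ M) := by
      intro M hM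
      rcases pm_parity hloop hXeven hff hC hM with ⟨h1, h2⟩ | ⟨h1, h2⟩
      · exact iff_of_true h1 h2
      · exact iff_of_false h1 h2
    refine ⟨⟨conn₁, card₁, ?_⟩, ⟨conn₂, card₂, ?_⟩⟩
    · rintro (e | u)
      · obtain ⟨M, hM, heM⟩ := hpm e.val
        exact ⟨_, restrict_pm hC hu₁ hu₂ hv₁ hv₂ hf hf' hM (parIff hM), heM⟩
      · obtain ⟨M, hM, hfM⟩ := hpm f
        exact ⟨_, restrict_pm hC hu₁ hu₂ hv₁ hv₂ hf hf' hM (parIff hM), hfM⟩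
    · rintro (e | u)
      · obtain ⟨M, hM, heM⟩ := hpm e.val
        exact ⟨_, restrict_pm hCc hu₂' hu₁' hv₂' hv₁' hfswap hf'swap hM (parIff hM), heM⟩
      · obtain ⟨M, hM, hfM⟩ := hpm f
        exact ⟨_, restrict_pm hCc hu₂' hu₁' hv₂' hv₁' hfswap hf'swap hM (parIff hM), hfM⟩
  · rintro ⟨⟨-, -, hpm₁⟩, ⟨-, -, hpm₂⟩⟩
    refine ⟨h2c.1, cardV, ?_⟩
    intro e
    have hcut_case : e = f ∨ e = f' → ∃ M, IsPM ends M ∧ e ∈ M := by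
      rintro hor
      obtain ⟨M₁, hM₁, hmem₁⟩ := hpm₁ (Sum.inr ())
      obtain ⟨M₂, hM₂, hmem₂⟩ := hpm₂ (Sum.inr ())
      exact ⟨_, combine_pm hff hu₁ hu₂ hv₁ hv₂ hf hf' hu₁v₁ hu₂v₂ hM₁ hM₂
        (iff_of_true hmem₁ hmem₂), Or.inr (Or.inr ⟨hmem₁, hor⟩)⟩
    obtain ⟨x, z, he⟩ := sym2_rep (ends e)
    by_cases hx : x ∈ X
    · by_cases hz : z ∈ X
      · -- e inside X
        have h : ∀ v ∈ ends e, v ∈ X := by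
          intro v hv
          rw [he, Sym2.mem_iff] at hv
          rcases hv with rfl | rfl
          exacts [hx, hz]
        obtain ⟨M₁, hM₁, hmem₁⟩ := hpm₁ (Sum.inl ⟨e, h⟩)
        by_cases hm : Sum.inr () ∈ M₁
        · obtain ⟨M₂, hM₂, hmem₂⟩ := hpm₂ (Sum.inr ())
          exact ⟨_, combine_pm hff hu₁ hu₂ hv₁ hv₂ hf hf' hu₁v₁ hu₂v₂ hM₁ hM₂
            (iff_of_true hm hmem₂), Or.inl ⟨h, hmem₁⟩⟩
        · obtain ⟨ee, heec, hu₂ee⟩ :=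
            exists_inside_edge h2c hC hu₁ hu₂ hv₁ hv₂ hf hf' hu₂v₂ hXc2
          obtain ⟨M₂, hM₂, hmem₂⟩ := hpm₂ (Sum.inl ⟨ee, heec⟩)
          have hm₂ : Sum.inr () ∉ M₂ := by
            intro hin
            obtain ⟨ε, -, hu⟩ := hM₂ ⟨u₂, hu₂'⟩
            have e1 := hu (Sum.inl ⟨ee, heec⟩)
              ⟨hmem₂, (mem_marked_inl _ _ _ _).mpr hu₂ee⟩
            have e2 := hu (Sum.inr ()) ⟨hin, Sym2.mem_iff.mpr (Or.inl rfl)⟩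
            exact nomatch (e1.trans e2.symm)
          exact ⟨_, combine_pm hff hu₁ hu₂ hv₁ hv₂ hf hf' hu₁v₁ hu₂v₂ hM₁ hM₂
            (iff_of_false hm hm₂), Or.inl ⟨h, hmem₁⟩⟩
      · exact hcut_case (cross_eq hC he hx hz)
    · by_cases hz : z ∈ X
      · exact hcut_case (cross_eq hC (he.trans Sym2.eq_swap) hz hx)
      · -- e inside Xᶜ
        have h : ∀ v ∈ ends e, v ∈ Xᶜ := by
          intro v hv
          rw [he, Sym2.mem_iff] at hv
          rcases hv with rfl | rfl
          exacts [hx, hz]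
        obtain ⟨M₂, hM₂, hmem₂⟩ := hpm₂ (Sum.inl ⟨e, h⟩)
        by_cases hm : Sum.inr () ∈ M₂
        · obtain ⟨M₁, hM₁, hmem₁⟩ := hpm₁ (Sum.inr ())
          exact ⟨_, combine_pm hff hu₁ hu₂ hv₁ hv₂ hf hf' hu₁v₁ hu₂v₂ hM₁ hM₂
            (iff_of_true hmem₁ hm), Or.inr (Or.inl ⟨h, hmem₂⟩)⟩
        · obtain ⟨ee, heec, hu₁ee⟩ :=
            exists_inside_edge h2c hCc hu₂' hu₁' hv₂' hv₁' hfswap hf'swap hu₁v₁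
              (by rwa [compl_compl])
          have heeX : ∀ v ∈ ends ee, v ∈ X := fun v hv => by simpa using heec v hv
          obtain ⟨M₁, hM₁, hmem₁⟩ := hpm₁ (Sum.inl ⟨ee, heeX⟩)
          have hm₁ : Sum.inr () ∉ M₁ := by
            intro hin
            obtain ⟨ε, -, hu⟩ := hM₁ ⟨u₁, hu₁⟩
            have e1 := hu (Sum.inl ⟨ee, heeX⟩)
              ⟨hmem₁, (mem_marked_inl _ _ _ _).mpr hu₁ee⟩
            have e2 := hu (Sum.inr ()) ⟨hin, Sym2.mem_iff.mpr (Or.inl rfl)⟩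
            exact nomatch (e1.trans e2.symm)
          exact ⟨_, combine_pm hff hu₁ hu₂ hv₁ hv₂ hf hf' hu₁v₁ hu₂v₂ hM₁ hM₂
            (iff_of_false hm₁ hm), Or.inr (Or.inl ⟨h, hmem₂⟩)⟩
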